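/- arXiv:1710.03780 — 2 statements merged into one kernel-verified Lean document; each statement's English description precedes it below -/
import Mathlib

section
/- For every n ∈ ℕ, n ≥ 1, and all z, ζ in the open unit disk D it holds that 1/(1 - conj(z)·ζ) = Σ_{k=0}^{n-1} conj(φ_k(z))·φ_k(ζ) + conj(B_n(z))·B_n(ζ)/(1 - conj(z)·ζ), where (φ_k) is the Takenaka–Malmquist system and B_n is the associated Blaschke product of degree n. -/
open Complex MeasureTheory Finset

/-- The unimodular factor `|c|/c`, set to `-1` when `c = 0`. -/
noncomputable def unitFactor (c : ℂ) : ℂ :=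
  if c = 0 then -1 else ((‖c‖ : ℝ) : ℂ) / c

/-- The Takenaka–Malmquist system generated by the sequence `a`. -/
noncomputable def TM (a : ℕ → ℂ) (k : ℕ) (z : ℂ) : ℂ :=
  ((Real.sqrt (1 - ‖a k‖ ^ 2) : ℝ) : ℂ) / (1 - (starRingEnd ℂ) (a k) * z) *
    ∏ j ∈ Finset.range k, (-(unitFactor (a j))) * ((z - a j) / (1 - (starRingEnd ℂ) (a j) * z))

/-- The Blaschke product of degree `k` associated with the sequence `a` (with `τ = 1`). -/
noncomputable def Blaschke (a : ℕ → ℂ) (k : ℕ) (z : ℂ) : ℂ :=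
  ∏ j ∈ Finset.range k, (z - a j) / (1 - (starRingEnd ℂ) (a j) * z)

/-- Integral over the unit circle with respect to the normalized Lebesgue measure σ
(complex-valued integrand). -/
noncomputable def circleAvg (f : ℂ → ℂ) : ℂ :=
  (1 / (2 * Real.pi) : ℂ) * ∫ θ in (0:ℝ)..(2 * Real.pi), f (Complex.exp (θ * Complex.I))

/-- Integral over the unit circle with respect to the normalized Lebesgue measure σ
(real-valued integrand). -/
noncomputable def circleAvgR (f : ℂ → ℝ) : ℝ :=
  (1 / (2 * Real.pi)) * ∫ θ in (0:ℝ)..(2 * Real.pi), f (Complex.exp (θ * Complex.I))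

/-- The Fourier coefficient `c_m(f)` of `f` in the Takenaka–Malmquist system. -/
noncomputable def fourierCoef (a : ℕ → ℂ) (f : ℂ → ℂ) (m : ℕ) : ℂ :=
  circleAvg (fun t => f t * (starRingEnd ℂ) (TM a m t))

/-- The weighted Bergman kernel `K_α(z; w) = 1/(1 - z·conj w)^(2+α)`. -/
noncomputable def bergman (α : ℕ) (w z : ℂ) : ℂ :=
  1 / (1 - z * (starRingEnd ℂ) w) ^ (2 + α)

/-- The partial sum `S_{n+1}(K_α)(z; w)` of the Fourier series of `K_α(·; w)` in the
Takenaka–Malmquist system. -/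
noncomputable def partialSum (a : ℕ → ℂ) (α : ℕ) (w : ℂ) (n : ℕ) (z : ℂ) : ℂ :=
  ∑ m ∈ Finset.range (n + 1), fourierCoef a (bergman α w) m * TM a m z

lemma conj_unitFactor_mul (c : ℂ) :
    (starRingEnd ℂ) (unitFactor c) * unitFactor c = 1 := by
  unfold unitFactor
  split_ifs with h
  · simp
  · have habs : ((‖c‖ : ℝ) : ℂ) ≠ 0 := by
      simpa using (norm_ne_zero_iff.mpr h)
    have hc' : (starRingEnd ℂ) c ≠ 0 := by simpa using h
    rw [map_div₀, Complex.conj_ofReal]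
    field_simp
    rw [mul_comm ((starRingEnd ℂ) c) c, Complex.mul_conj, ← Complex.sq_norm]
    push_cast
    ring

lemma one_sub_mul_ne (z w : ℂ) (hz : ‖z‖ < 1) (hw : ‖w‖ < 1) :
    (1 : ℂ) - z * w ≠ 0 := by
  intro h
  have h1 : z * w = 1 := by linear_combination -h
  have : ‖z * w‖ < 1 := by
    rw [norm_mul]
    calc ‖z‖ * ‖w‖ ≤ ‖z‖ * 1 :=
          mul_le_mul_of_nonneg_left hw.le (norm_nonneg z)
      _ < 1 := by simpa using hz
  rw [h1] at this; simp at this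

lemma conjTM_mul (a : ℕ → ℂ) (ha : ∀ k : ℕ, ‖a k‖ < 1) (k : ℕ) (z ζ : ℂ)
    (hz : ‖z‖ < 1) (hζ : ‖ζ‖ < 1) :
    (starRingEnd ℂ) (TM a k z) * TM a k ζ =
      ((1 - ‖a k‖ ^ 2 : ℝ) : ℂ) /
          ((1 - a k * (starRingEnd ℂ) z) * (1 - (starRingEnd ℂ) (a k) * ζ)) *
        ((starRingEnd ℂ) (Blaschke a k z) * Blaschke a k ζ) := by
  have hs : Real.sqrt (1 - ‖a k‖ ^ 2) * Real.sqrt (1 - ‖a k‖ ^ 2)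
      = 1 - ‖a k‖ ^ 2 := by
    apply Real.mul_self_sqrt
    nlinarith [ha k, norm_nonneg (a k)]
  unfold TM Blaschke
  rw [map_mul, map_div₀, Complex.conj_ofReal, map_prod]
  have hprod : (∏ j ∈ Finset.range k,
        (starRingEnd ℂ) (-(unitFactor (a j)) * ((z - a j) / (1 - (starRingEnd ℂ) (a j) * z)))) *
      ∏ j ∈ Finset.range k,
        (-(unitFactor (a j))) * ((ζ - a j) / (1 - (starRingEnd ℂ) (a j) * ζ)) =
      ((starRingEnd ℂ) (∏ j ∈ Finset.range k, (z - a j) / (1 - (starRingEnd ℂ) (a j) * z))) *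
        ∏ j ∈ Finset.range k, (ζ - a j) / (1 - (starRingEnd ℂ) (a j) * ζ) := by
    rw [map_prod, ← Finset.prod_mul_distrib, ← Finset.prod_mul_distrib]
    apply Finset.prod_congr rfl
    intro j _
    rw [map_mul, map_neg]
    linear_combination ((starRingEnd ℂ) ((z - a j) / (1 - (starRingEnd ℂ) (a j) * z)) *
      ((ζ - a j) / (1 - (starRingEnd ℂ) (a j) * ζ))) * conj_unitFactor_mul (a j)
  have hdz : (1 : ℂ) - (starRingEnd ℂ) (a k) * z ≠ 0 :=
    one_sub_mul_ne _ _ (by simpa using ha k) hz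
  have hdζ : (1 : ℂ) - (starRingEnd ℂ) (a k) * ζ ≠ 0 :=
    one_sub_mul_ne _ _ (by simpa using ha k) hζ
  have hdz' : (1 : ℂ) - a k * (starRingEnd ℂ) z ≠ 0 :=
    one_sub_mul_ne _ _ (ha k) (by simpa using hz)
  have h1 : (starRingEnd ℂ) (1 - (starRingEnd ℂ) (a k) * z) = 1 - a k * (starRingEnd ℂ) z := by
    simp [map_sub, map_mul]
  have hs' : ((Real.sqrt (1 - ‖a k‖ ^ 2) : ℝ) : ℂ) *
      ((Real.sqrt (1 - ‖a k‖ ^ 2) : ℝ) : ℂ) =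
      ((1 - ‖a k‖ ^ 2 : ℝ) : ℂ) := by exact_mod_cast congrArg Complex.ofReal hs
  rw [h1]
  set A := (starRingEnd ℂ) (∏ j ∈ Finset.range k, (z - a j) / (1 - (starRingEnd ℂ) (a j) * z))
  set B := ∏ j ∈ Finset.range k, (ζ - a j) / (1 - (starRingEnd ℂ) (a j) * ζ)
  rw [mul_mul_mul_comm, hprod, div_mul_div_comm, hs']

/-- Christoffel-type identity: For every `n ≥ 1` and all `z, ζ` in the open
unit disk, `1/(1 - conj(z)·ζ) = ∑_{k=0}^{n-1} conj(φ_k(z))·φ_k(ζ) +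
conj(B_n(z))·B_n(ζ)/(1 - conj(z)·ζ)`, where `(φ_k)` is the Takenaka–Malmquist system and
`B_n` the associated Blaschke product of degree `n`. -/
theorem christoffel_identity (a : ℕ → ℂ) (ha : ∀ k, ‖a k‖ < 1)
    (n : ℕ) (hn : 1 ≤ n) (z ζ : ℂ) (hz : ‖z‖ < 1) (hζ : ‖ζ‖ < 1) :
    1 / (1 - (starRingEnd ℂ) z * ζ) =
      (∑ k ∈ Finset.range n, (starRingEnd ℂ) (TM a k z) * TM a k ζ) +
        (starRingEnd ℂ) (Blaschke a n z) * Blaschke a n ζ / (1 - (starRingEnd ℂ) z * ζ) := by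
  clear hn
  induction n with
  | zero => simp [Blaschke]
  | succ n ih =>
    have key : (starRingEnd ℂ) (Blaschke a n z) * Blaschke a n ζ / (1 - (starRingEnd ℂ) z * ζ) =
        (starRingEnd ℂ) (TM a n z) * TM a n ζ +
          (starRingEnd ℂ) (Blaschke a (n + 1) z) * Blaschke a (n + 1) ζ /
            (1 - (starRingEnd ℂ) z * ζ) := by
      have hBz : Blaschke a (n + 1) z
          = Blaschke a n z * ((z - a n) / (1 - (starRingEnd ℂ) (a n) * z)) := by
        unfold Blaschke; exact Finset.prod_range_succ _ _
      have hBζ : Blaschke a (n + 1) ζ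
          = Blaschke a n ζ * ((ζ - a n) / (1 - (starRingEnd ℂ) (a n) * ζ)) := by
        unfold Blaschke; exact Finset.prod_range_succ _ _
      have hdz : (1 : ℂ) - (starRingEnd ℂ) (a n) * z ≠ 0 :=
        one_sub_mul_ne _ _ (by simpa using ha n) hz
      have hdζ : (1 : ℂ) - (starRingEnd ℂ) (a n) * ζ ≠ 0 :=
        one_sub_mul_ne _ _ (by simpa using ha n) hζ
      have hdz' : (1 : ℂ) - a n * (starRingEnd ℂ) z ≠ 0 :=
        one_sub_mul_ne _ _ (ha n) (by simpa using hz)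
      have hd : (1 : ℂ) - (starRingEnd ℂ) z * ζ ≠ 0 :=
        one_sub_mul_ne _ _ (by simpa using hz) hζ
      rw [conjTM_mul a ha n z ζ hz hζ, hBz, hBζ, map_mul, map_div₀]
      have h1 : (starRingEnd ℂ) (1 - (starRingEnd ℂ) (a n) * z)
          = 1 - a n * (starRingEnd ℂ) z := by simp [map_sub, map_mul]
      have h2 : (starRingEnd ℂ) (z - a n) = (starRingEnd ℂ) z - (starRingEnd ℂ) (a n) :=
        map_sub _ _ _
      rw [h1, h2]
      have habs : ((1 - ‖a n‖ ^ 2 : ℝ) : ℂ)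
          = 1 - a n * (starRingEnd ℂ) (a n) := by
        rw [Complex.mul_conj]; push_cast [Complex.sq_norm]; ring
      set A := (starRingEnd ℂ) (Blaschke a n z)
      set B := Blaschke a n ζ
      rw [habs]
      rw [div_eq_iff hd]
      field_simp
      ring
    rw [Finset.sum_range_succ, add_assoc, ← key]
    exact ih
end

section
/- Let f be a function in the Hardy space H²(D) of the unit disk. Then for every n ∈ ℕ, n ≥ 1, and every z ∈ D one has f(z) = Σ_{m=0}^{n-1} c_m(f)·φ_m(z) + B_n(z)·∫_T conj(B_n(t))·f(t)/(1 - z·conj(t)) dσ(t), where c_m(f) = ∫_T f(t)·conj(φ_m(t)) dσ(t), f on the unit circle T is understood via its nontangential boundary values, (φ_k) is the Takenaka–Malmquist system and B_n the associated Blaschke product. -/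
open Complex MeasureTheory Finset

namespace HardyAux

lemma one_sub_ne {u v : ℂ} (hu : ‖u‖ < 1) (hv : ‖v‖ ≤ 1) :
    (1 : ℂ) - u * v ≠ 0 := by
  intro h
  have h1 : u * v = 1 := by linear_combination -h
  have h2 : ‖u * v‖ = 1 := by rw [h1]; simp
  rw [norm_mul] at h2
  nlinarith [norm_nonneg v, norm_nonneg u]

lemma unitFactor_pair (c : ℂ) : (starRingEnd ℂ) (unitFactor c) * unitFactor c = 1 := by
  unfold unitFactor
  by_cases h : c = 0
  · simp [h]
  · rw [if_neg h, map_div₀, Complex.conj_ofReal]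
    rw [div_mul_div_comm, ← Complex.ofReal_mul, mul_comm ((starRingEnd ℂ) c) c,
      Complex.mul_conj, Complex.normSq_eq_norm_sq]
    have habs : (‖c‖ : ℂ) ≠ 0 := by
      simpa using (norm_ne_zero_iff.2 h)
    push_cast
    field_simp

lemma scalar (w z t : ℂ) (hw : ‖w‖ < 1) (hz : ‖z‖ < 1)
    (ht : ‖t‖ = 1) :
    (((Real.sqrt (1 - ‖w‖ ^ 2) : ℝ) : ℂ)) ^ 2 /
        ((1 - w * (starRingEnd ℂ) t) * (1 - (starRingEnd ℂ) w * z)) =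
      (1 - (z - w) / (1 - (starRingEnd ℂ) w * z) *
        (starRingEnd ℂ) ((t - w) / (1 - (starRingEnd ℂ) w * t))) / (1 - z * (starRingEnd ℂ) t) := by
  have h1 : (1 : ℂ) - (starRingEnd ℂ) w * z ≠ 0 := one_sub_ne (by simpa using hw) hz.le
  have h2 : (1 : ℂ) - w * (starRingEnd ℂ) t ≠ 0 := one_sub_ne hw (by simp [ht])
  have h3 : (1 : ℂ) - z * (starRingEnd ℂ) t ≠ 0 := one_sub_ne hz (by simp [ht])
  have h4 : (1 : ℂ) - (starRingEnd ℂ) w * t ≠ 0 := one_sub_ne (by simpa using hw) ht.le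
  have hsq : (((Real.sqrt (1 - ‖w‖ ^ 2) : ℝ) : ℂ)) ^ 2
      = 1 - w * (starRingEnd ℂ) w := by
    rw [← Complex.ofReal_pow, Real.sq_sqrt (by nlinarith [norm_nonneg w]),
      Complex.mul_conj, ← Complex.sq_norm]
    push_cast; ring
  rw [hsq, map_div₀, map_sub, map_sub, map_one, map_mul, Complex.conj_conj]
  have h3' : (1 : ℂ) - (starRingEnd ℂ) t * z ≠ 0 := by rwa [mul_comm]
  field_simp
  ring

lemma TM_pair (a : ℕ → ℂ) (ha : ∀ k, ‖a k‖ < 1) (m : ℕ) (z t : ℂ)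
    (hz : ‖z‖ < 1) (ht : ‖t‖ = 1) :
    (starRingEnd ℂ) (TM a m t) * TM a m z =
      (Blaschke a m z * (starRingEnd ℂ) (Blaschke a m t) -
        Blaschke a (m+1) z * (starRingEnd ℂ) (Blaschke a (m+1) t)) /
        (1 - z * (starRingEnd ℂ) t) := by
  have hs := scalar (a m) z t (ha m) hz ht
  rw [← div_div] at hs
  unfold TM Blaschke
  rw [Finset.prod_range_succ, Finset.prod_range_succ]
  simp only [map_mul, map_div₀, map_sub, map_one, map_prod, map_neg, Complex.conj_conj,
    Complex.conj_ofReal] at hs ⊢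
  have hprod1 : (∏ j ∈ Finset.range m, -((starRingEnd ℂ) (unitFactor (a j)))) *
      (∏ j ∈ Finset.range m, -(unitFactor (a j))) = 1 := by
    rw [← Finset.prod_mul_distrib]
    apply Finset.prod_eq_one
    intro j _
    rw [neg_mul_neg]
    exact unitFactor_pair (a j)
  set C : ℂ := ((Real.sqrt (1 - ‖a m‖ ^ 2) : ℝ) : ℂ) with hC
  set Pt := ∏ j ∈ Finset.range m,
    (((starRingEnd ℂ) t - (starRingEnd ℂ) (a j)) / (1 - a j * (starRingEnd ℂ) t)) with hPt
  set Pz := ∏ j ∈ Finset.range m, ((z - a j) / (1 - (starRingEnd ℂ) (a j) * z)) with hPz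
  set Pc := ∏ j ∈ Finset.range m, -((starRingEnd ℂ) (unitFactor (a j))) with hPc
  set Pu := ∏ j ∈ Finset.range m, -(unitFactor (a j)) with hPu
  rw [Finset.prod_mul_distrib, Finset.prod_mul_distrib]
  linear_combination (C / (1 - a m * (starRingEnd ℂ) t)) * (C / (1 - (starRingEnd ℂ) (a m) * z)) *
      Pt * Pz * hprod1 + Pt * Pz * hs

lemma CD (a : ℕ → ℂ) (ha : ∀ k, ‖a k‖ < 1) (n : ℕ) (z t : ℂ)
    (hz : ‖z‖ < 1) (ht : ‖t‖ = 1) :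
    ∑ m ∈ Finset.range n, (starRingEnd ℂ) (TM a m t) * TM a m z =
      (1 - Blaschke a n z * (starRingEnd ℂ) (Blaschke a n t)) /
        (1 - z * (starRingEnd ℂ) t) := by
  have h : ∀ m, (starRingEnd ℂ) (TM a m t) * TM a m z =
      ((fun k => Blaschke a k z * (starRingEnd ℂ) (Blaschke a k t)) m -
        (fun k => Blaschke a k z * (starRingEnd ℂ) (Blaschke a k t)) (m+1)) /
        (1 - z * (starRingEnd ℂ) t) := fun m => TM_pair a ha m z t hz ht
  calc ∑ m ∈ Finset.range n, (starRingEnd ℂ) (TM a m t) * TM a m z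
      = (∑ m ∈ Finset.range n,
          ((fun k => Blaschke a k z * (starRingEnd ℂ) (Blaschke a k t)) m -
            (fun k => Blaschke a k z * (starRingEnd ℂ) (Blaschke a k t)) (m+1))) /
          (1 - z * (starRingEnd ℂ) t) := by
        rw [Finset.sum_div]
        exact Finset.sum_congr rfl fun m _ => h m
    _ = (1 - Blaschke a n z * (starRingEnd ℂ) (Blaschke a n t)) /
          (1 - z * (starRingEnd ℂ) t) := by
        rw [Finset.sum_range_sub' (fun k => Blaschke a k z * (starRingEnd ℂ) (Blaschke a k t)) n]
        simp [Blaschke]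

noncomputable def E (θ : ℝ) : ℂ := Complex.exp (θ * Complex.I)

lemma abs_E (θ : ℝ) : ‖E θ‖ = 1 := Complex.norm_exp_ofReal_mul_I θ

lemma E_mem_sphere (θ : ℝ) : E θ ∈ Metric.sphere (0:ℂ) 1 := by
  simp [Complex.dist_eq, abs_E θ]

lemma continuous_E : Continuous E := by
  unfold E; fun_prop

/-- The dilation sequence. -/
noncomputable def rseq (k : ℕ) : ℝ := 1 - (((k:ℝ)+2))⁻¹

lemma rseq_pos (k : ℕ) : 0 < rseq k := by
  have h : (((k:ℝ)+2))⁻¹ ≤ 2⁻¹ := by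
    apply inv_anti₀ <;> [norm_num; simp]
  have : (0:ℝ) < (k:ℝ) + 2 := by positivity
  unfold rseq
  nlinarith

lemma rseq_lt_one (k : ℕ) : rseq k < 1 := by
  have : (0:ℝ) < (((k:ℝ)+2))⁻¹ := by positivity
  unfold rseq; linarith

lemma rseq_tendsto : Filter.Tendsto rseq Filter.atTop (nhdsWithin 1 (Set.Iio 1)) := by
  apply tendsto_nhdsWithin_of_tendsto_nhds_of_eventually_within
  · have h : Filter.Tendsto (fun k : ℕ => (((k:ℝ)+2))⁻¹) Filter.atTop (nhds 0) := by
      apply Filter.Tendsto.inv_tendsto_atTop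
      exact Filter.tendsto_atTop_add_const_right _ 2 tendsto_natCast_atTop_atTop
    have h1 : Filter.Tendsto (fun k : ℕ => 1 - (((k:ℝ)+2))⁻¹) Filter.atTop (nhds (1 - 0)) :=
      Filter.Tendsto.const_sub 1 h
    rw [sub_zero] at h1; exact h1
  · exact Filter.Eventually.of_forall fun k => rseq_lt_one k

section Boundary

variable {f : ℂ → ℂ}

/-- continuity of the dilated boundary functions -/
lemma continuous_dilated (hf : DifferentiableOn ℂ f (Metric.ball (0:ℂ) 1))
    {ρ : ℝ} (h0 : 0 ≤ ρ) (h1 : ρ < 1) :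
    Continuous (fun θ : ℝ => f ((ρ:ℂ) * E θ)) := by
  apply hf.continuousOn.comp_continuous (continuous_const.mul continuous_E)
  intro θ
  rw [Metric.mem_ball, dist_zero_right]; show ‖(ρ:ℂ) * E θ‖ < 1; rw [norm_mul, abs_E θ,
    Complex.norm_real, Real.norm_eq_abs, _root_.abs_of_nonneg h0]
  simpa using h1

lemma norm_sq_lintegral_le (hf : DifferentiableOn ℂ f (Metric.ball (0:ℂ) 1))
    {C : ℝ} (hC : ∀ ρ : ℝ, 0 < ρ → ρ < 1 →
      circleAvgR (fun t => ‖f ((ρ:ℂ) * t)‖ ^ 2) ≤ C)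
    {ρ : ℝ} (h0 : 0 < ρ) (h1 : ρ < 1) :
    ∫⁻ θ in Set.Ioc 0 (2*Real.pi), ((‖f ((ρ:ℂ) * E θ)‖₊ : ENNReal)) ^ 2 ∂volume
      ≤ ENNReal.ofReal (2 * Real.pi * C) := by
  have hcont : Continuous (fun θ : ℝ => f ((ρ:ℂ) * E θ)) := continuous_dilated hf h0.le h1
  have hint : IntegrableOn (fun θ : ℝ => ‖f ((ρ:ℂ) * E θ)‖ ^ 2)
      (Set.Ioc 0 (2*Real.pi)) volume := by
    have hc2 : Continuous fun θ : ℝ => ‖f ((ρ:ℂ) * E θ)‖ ^ 2 := (hcont.norm).pow 2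
    exact hc2.integrableOn_Ioc
  have h2 := hC ρ h0 h1
  unfold circleAvgR at h2
  rw [intervalIntegral.integral_of_le (by positivity : (0:ℝ) ≤ 2*Real.pi)] at h2
  have hpi : (0:ℝ) < 2 * Real.pi := by positivity
  have heq : (∫ x in Set.Ioc 0 (2*Real.pi),
        (fun t => ‖f ((ρ:ℂ) * t)‖ ^ 2) (Complex.exp (x * Complex.I)) ∂volume)
      = ∫ θ in Set.Ioc 0 (2*Real.pi), ‖f ((ρ:ℂ) * E θ)‖ ^ 2 ∂volume := rfl
  rw [heq] at h2
  have h3 : ∫ θ in Set.Ioc 0 (2*Real.pi), ‖f ((ρ:ℂ) * E θ)‖ ^ 2 ∂volume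
      ≤ 2 * Real.pi * C := by
    rw [one_div, inv_mul_le_iff₀ hpi] at h2
    linarith [h2]
  calc ∫⁻ θ in Set.Ioc 0 (2*Real.pi), ((‖f ((ρ:ℂ) * E θ)‖₊ : ENNReal)) ^ 2 ∂volume
      = ∫⁻ θ in Set.Ioc 0 (2*Real.pi),
          ENNReal.ofReal (‖f ((ρ:ℂ) * E θ)‖ ^ 2) ∂volume := by
        apply lintegral_congr
        intro θ
        rw [ENNReal.ofReal_pow (norm_nonneg _),
          ofReal_norm, enorm_eq_nnnorm]
    _ = ENNReal.ofReal (∫ θ in Set.Ioc 0 (2*Real.pi),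
          ‖f ((ρ:ℂ) * E θ)‖ ^ 2 ∂volume) := by
        rw [MeasureTheory.ofReal_integral_eq_lintegral_ofReal hint]
        exact Filter.Eventually.of_forall fun θ => by positivity
    _ ≤ ENNReal.ofReal (2 * Real.pi * C) := ENNReal.ofReal_le_ofReal h3

lemma ae_tendsto_boundary
    (hbdry : ∀ᵐ θ : ℝ, Filter.Tendsto
      (fun ρ : ℝ => f ((ρ:ℂ) * Complex.exp (θ * Complex.I)))
      (nhdsWithin 1 (Set.Iio 1)) (nhds (f (Complex.exp (θ * Complex.I))))) :
    ∀ᵐ θ ∂(volume.restrict (Set.Ioc 0 (2*Real.pi))),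
      Filter.Tendsto (fun k => f ((rseq k : ℂ) * E θ)) Filter.atTop (nhds (f (E θ))) := by
  refine ae_restrict_of_ae ?_
  filter_upwards [hbdry] with θ hθ
  exact hθ.comp rseq_tendsto

lemma memLp_boundary (hf : DifferentiableOn ℂ f (Metric.ball (0:ℂ) 1))
    {C : ℝ} (hC : ∀ ρ : ℝ, 0 < ρ → ρ < 1 →
      circleAvgR (fun t => ‖f ((ρ:ℂ) * t)‖ ^ 2) ≤ C)
    (hbdry : ∀ᵐ θ : ℝ, Filter.Tendsto
      (fun ρ : ℝ => f ((ρ:ℂ) * Complex.exp (θ * Complex.I)))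
      (nhdsWithin 1 (Set.Iio 1)) (nhds (f (Complex.exp (θ * Complex.I))))) :
    MemLp (fun θ : ℝ => f (E θ)) 2 (volume.restrict (Set.Ioc 0 (2*Real.pi))) := by
  have hcont : ∀ k, Continuous (fun θ : ℝ => f ((rseq k : ℂ) * E θ)) :=
    fun k => continuous_dilated hf (rseq_pos k).le (rseq_lt_one k)
  have hae := ae_tendsto_boundary (f := f) hbdry
  have hmeas : AEStronglyMeasurable (fun θ : ℝ => f (E θ))
      (volume.restrict (Set.Ioc 0 (2*Real.pi))) :=
    aestronglyMeasurable_of_tendsto_ae Filter.atTop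
      (fun k => (hcont k).aestronglyMeasurable) hae
  have hb : ∫⁻ θ in Set.Ioc 0 (2*Real.pi), ((‖f (E θ)‖₊ : ENNReal))^2 ∂volume
      ≤ ENNReal.ofReal (2*Real.pi*C) := by
    have hptlim : ∀ᵐ θ ∂(volume.restrict (Set.Ioc 0 (2*Real.pi))),
        ((‖f (E θ)‖₊ : ENNReal))^2 =
          Filter.liminf (fun k => ((‖f ((rseq k : ℂ) * E θ)‖₊ : ENNReal))^2) Filter.atTop := by
      filter_upwards [hae] with θ hθ
      have h1 : Filter.Tendsto (fun k => ‖f ((rseq k : ℂ) * E θ)‖₊) Filter.atTop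
          (nhds ‖f (E θ)‖₊) := hθ.nnnorm
      have h2 : Filter.Tendsto (fun k => ((‖f ((rseq k : ℂ) * E θ)‖₊ : ENNReal))^2)
          Filter.atTop (nhds (((‖f (E θ)‖₊ : ENNReal))^2)) := by
        have := ENNReal.tendsto_coe.2 (h1.pow 2)
        push_cast at this
        exact this
      exact h2.liminf_eq.symm
    calc ∫⁻ θ in Set.Ioc 0 (2*Real.pi), ((‖f (E θ)‖₊ : ENNReal))^2 ∂volume
        = ∫⁻ θ in Set.Ioc 0 (2*Real.pi),
            Filter.liminf (fun k => ((‖f ((rseq k : ℂ) * E θ)‖₊ : ENNReal))^2)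
              Filter.atTop ∂volume := lintegral_congr_ae hptlim
      _ ≤ Filter.liminf
            (fun k => ∫⁻ θ in Set.Ioc 0 (2*Real.pi),
              ((‖f ((rseq k : ℂ) * E θ)‖₊ : ENNReal))^2 ∂volume) Filter.atTop :=
          lintegral_liminf_le
            (fun k => ((hcont k).measurable.nnnorm.coe_nnreal_ennreal.pow_const 2))
      _ ≤ Filter.liminf (fun _ : ℕ => ENNReal.ofReal (2*Real.pi*C)) Filter.atTop :=
          Filter.liminf_le_liminf (Filter.Eventually.of_forall fun k =>
            norm_sq_lintegral_le hf hC (rseq_pos k) (rseq_lt_one k))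
      _ = ENNReal.ofReal (2*Real.pi*C) := Filter.liminf_const _
  refine ⟨hmeas, ?_⟩
  rw [MeasureTheory.eLpNorm_eq_lintegral_rpow_enorm_toReal (by norm_num) (by norm_num)]
  have htr : ((2:ENNReal)).toReal = (2:ℝ) := by norm_num
  rw [htr]
  have hrw : ∀ x : ENNReal, x ^ (2:ℝ) = x ^ (2:ℕ) := fun x => by
    rw [← ENNReal.rpow_natCast]; norm_num
  calc (∫⁻ θ in Set.Ioc 0 (2*Real.pi), ((‖f (E θ)‖₊ : ENNReal)) ^ (2:ℝ) ∂volume) ^ (1/(2:ℝ))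
      = (∫⁻ θ in Set.Ioc 0 (2*Real.pi), ((‖f (E θ)‖₊ : ENNReal)) ^ (2:ℕ) ∂volume) ^ (1/(2:ℝ)) := by
        congr 1
        exact lintegral_congr fun θ => hrw _
    _ < ⊤ := ENNReal.rpow_lt_top_of_nonneg (by norm_num)
        (lt_of_le_of_lt hb ENNReal.ofReal_lt_top).ne

lemma integrable_boundary_mul (hf : DifferentiableOn ℂ f (Metric.ball (0:ℂ) 1))
    {C : ℝ} (hC : ∀ ρ : ℝ, 0 < ρ → ρ < 1 →
      circleAvgR (fun t => ‖f ((ρ:ℂ) * t)‖ ^ 2) ≤ C)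
    (hbdry : ∀ᵐ θ : ℝ, Filter.Tendsto
      (fun ρ : ℝ => f ((ρ:ℂ) * Complex.exp (θ * Complex.I)))
      (nhdsWithin 1 (Set.Iio 1)) (nhds (f (Complex.exp (θ * Complex.I)))))
    (W : ℂ → ℂ) (hW : ContinuousOn W (Metric.sphere (0:ℂ) 1)) :
    Integrable (fun θ : ℝ => W (E θ) * f (E θ))
      (volume.restrict (Set.Ioc 0 (2*Real.pi))) := by
  have hint : Integrable (fun θ : ℝ => f (E θ)) (volume.restrict (Set.Ioc 0 (2*Real.pi))) :=
    memLp_one_iff_integrable.1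
      ((memLp_boundary hf hC hbdry).mono_exponent (by norm_num))
  obtain ⟨Cb, hCb⟩ := (isCompact_sphere (0:ℂ) 1).exists_bound_of_continuousOn hW
  have hWc : Continuous fun θ : ℝ => W (E θ) := hW.comp_continuous continuous_E E_mem_sphere
  exact hint.bdd_mul hWc.aestronglyMeasurable (Filter.Eventually.of_forall fun θ => hCb _ (E_mem_sphere θ))

lemma cauchy_dilate (hf : DifferentiableOn ℂ f (Metric.ball (0:ℂ) 1))
    {ρ : ℝ} (h0 : 0 < ρ) (h1 : ρ < 1) {z : ℂ} (hz : ‖z‖ < 1) :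
    ∫ θ in Set.Ioc 0 (2*Real.pi), f ((ρ:ℂ) * E θ) / (1 - z * (starRingEnd ℂ) (E θ)) ∂volume
      = (2*Real.pi : ℂ) * f ((ρ:ℂ) * z) := by
  have hF : DiffContOnCl ℂ (fun w => f ((ρ:ℂ) * w)) (Metric.ball (0:ℂ) 1) := by
    apply DifferentiableOn.diffContOnCl
    intro w hw
    rw [closure_ball (0:ℂ) one_ne_zero, Metric.mem_closedBall, dist_zero_right] at hw
    have hmem : (ρ:ℂ) * w ∈ Metric.ball (0:ℂ) 1 := by
      rw [Metric.mem_ball, dist_zero_right, norm_mul, Complex.norm_real, Real.norm_eq_abs,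
        _root_.abs_of_nonneg h0.le]
      calc ρ * ‖w‖ ≤ ρ * 1 := by
            apply mul_le_mul_of_nonneg_left _ h0.le
            simpa using hw
        _ < 1 := by linarith
    have hfd : DifferentiableAt ℂ f ((ρ:ℂ) * w) :=
      hf.differentiableAt (Metric.isOpen_ball.mem_nhds hmem)
    exact (hfd.comp w ((differentiableAt_const _).mul differentiableAt_id)).differentiableWithinAt
  have hzz : z ∈ Metric.ball (0:ℂ) 1 := by
    rw [Metric.mem_ball, dist_zero_right]; exact hz
  have key := hF.circleIntegral_sub_inv_smul hzz
  rw [circleIntegral] at key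
  have hptw : ∀ θ : ℝ, deriv (circleMap 0 1) θ •
      ((circleMap 0 1 θ - z)⁻¹ • f ((ρ:ℂ) * circleMap 0 1 θ)) =
        Complex.I * (f ((ρ:ℂ) * E θ) / (1 - z * (starRingEnd ℂ) (E θ))) := by
    intro θ
    have hE : circleMap 0 1 θ = E θ := by simp [circleMap, E]
    have habs : ‖E θ‖ = 1 := abs_E θ
    have hEne : E θ ≠ 0 := by
      intro h; rw [h] at habs; simp at habs
    have hne : E θ - z ≠ 0 := by
      intro h
      have : E θ = z := by linear_combination h
      rw [this] at habs; rw [habs] at hz; exact lt_irrefl _ hz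
    have hconj : (starRingEnd ℂ) (E θ) = (E θ)⁻¹ := (Complex.inv_eq_conj habs).symm
    have hden : 1 - z * (starRingEnd ℂ) (E θ) ≠ 0 :=
      one_sub_ne hz (le_of_eq (by simp [habs]))
    rw [deriv_circleMap, hE, smul_eq_mul, smul_eq_mul, hconj]
    rw [hconj] at hden
    field_simp
  rw [intervalIntegral.integral_congr (g := fun θ : ℝ =>
      Complex.I * (f ((ρ:ℂ) * E θ) / (1 - z * (starRingEnd ℂ) (E θ))))
      (fun θ _ => hptw θ)] at key
  rw [intervalIntegral.integral_const_mul, smul_eq_mul] at key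
  have hI : (Complex.I : ℂ) ≠ 0 := Complex.I_ne_zero
  have key2 : (∫ θ in (0:ℝ)..(2*Real.pi),
      f ((ρ:ℂ) * E θ) / (1 - z * (starRingEnd ℂ) (E θ))) = (2*Real.pi : ℂ) * f ((ρ:ℂ) * z) := by
    apply mul_left_cancel₀ hI
    rw [key]; ring
  rw [← intervalIntegral.integral_of_le (by positivity : (0:ℝ) ≤ 2*Real.pi)]
  exact key2

lemma contOn_kernel {z : ℂ} (hz : ‖z‖ < 1) :
    ContinuousOn (fun t : ℂ => (1 - z * (starRingEnd ℂ) t)⁻¹) (Metric.sphere (0:ℂ) 1) := by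
  apply ContinuousOn.inv₀
  · exact (continuousOn_const.sub (continuousOn_const.mul
      (Complex.continuous_conj.continuousOn)))
  · intro t ht
    rw [Metric.mem_sphere, Complex.dist_eq, sub_zero] at ht
    exact one_sub_ne hz (by simp [ht])

lemma cauchy_boundary (hf : DifferentiableOn ℂ f (Metric.ball (0:ℂ) 1))
    {C : ℝ} (hC : ∀ ρ : ℝ, 0 < ρ → ρ < 1 →
      circleAvgR (fun t => ‖f ((ρ:ℂ) * t)‖ ^ 2) ≤ C)
    (hbdry : ∀ᵐ θ : ℝ, Filter.Tendsto
      (fun ρ : ℝ => f ((ρ:ℂ) * Complex.exp (θ * Complex.I)))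
      (nhdsWithin 1 (Set.Iio 1)) (nhds (f (Complex.exp (θ * Complex.I)))))
    {z : ℂ} (hz : ‖z‖ < 1) :
    ∫ θ in Set.Ioc 0 (2*Real.pi), f (E θ) / (1 - z * (starRingEnd ℂ) (E θ)) ∂volume
      = (2*Real.pi : ℂ) * f z := by
  set μ := volume.restrict (Set.Ioc 0 (2*Real.pi)) with hμdef
  set K : ℝ → ℂ := fun θ => (1 - z * (starRingEnd ℂ) (E θ))⁻¹ with hKdef
  have hKc : Continuous K := (contOn_kernel hz).comp_continuous continuous_E E_mem_sphere
  obtain ⟨Kb, hKb⟩ := (isCompact_sphere (0:ℂ) 1).exists_bound_of_continuousOn (contOn_kernel hz)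
  have hKbd : ∀ θ : ℝ, ‖K θ‖ ≤ Kb := fun θ => hKb _ (E_mem_sphere θ)
  have hKb0 : 0 ≤ Kb := le_trans (norm_nonneg _) (hKbd 0)
  set G : ℕ → ℝ → ℂ := fun k θ => f ((rseq k : ℂ) * E θ) * K θ with hGdef
  set g : ℝ → ℂ := fun θ => f (E θ) * K θ with hgdef
  have hcontG : ∀ k, Continuous (G k) :=
    fun k => (continuous_dilated hf (rseq_pos k).le (rseq_lt_one k)).mul hKc
  have haeb := ae_tendsto_boundary (f := f) hbdry
  have hae : ∀ᵐ θ ∂μ, Filter.Tendsto (fun k => G k θ) Filter.atTop (nhds (g θ)) := by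
    filter_upwards [haeb] with θ hθ
    exact hθ.mul tendsto_const_nhds
  have hgmem : MemLp g 1 μ := by
    rw [memLp_one_iff_integrable]
    have := integrable_boundary_mul hf hC hbdry _ (contOn_kernel hz)
    exact this.congr (Filter.Eventually.of_forall fun θ => mul_comm _ _)
  -- uniform second-moment bound
  set A : ENNReal := ENNReal.ofReal (2*Real.pi*C) * (ENNReal.ofReal Kb)^2 with hAdef
  have hAne : A ≠ ⊤ := by
    rw [hAdef]
    exact ENNReal.mul_ne_top ENNReal.ofReal_ne_top (by simp [ENNReal.pow_ne_top])
  have hA : ∀ k, ∫⁻ θ, ((‖G k θ‖₊ : ENNReal))^2 ∂μ ≤ A := by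
    intro k
    have hpt : ∀ θ, ((‖G k θ‖₊ : ENNReal))^2 ≤
        ((‖f ((rseq k : ℂ) * E θ)‖₊ : ENNReal))^2 * (ENNReal.ofReal Kb)^2 := by
      intro θ
      rw [hGdef]
      simp only [nnnorm_mul, ENNReal.coe_mul, mul_pow]
      apply mul_le_mul_right
      apply pow_le_pow_left' 
      rw [← enorm_eq_nnnorm, ← ofReal_norm]
      exact ENNReal.ofReal_le_ofReal (hKbd θ)
    calc ∫⁻ θ, ((‖G k θ‖₊ : ENNReal))^2 ∂μ
        ≤ ∫⁻ θ, ((‖f ((rseq k : ℂ) * E θ)‖₊ : ENNReal))^2 * (ENNReal.ofReal Kb)^2 ∂μ :=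
          lintegral_mono hpt
      _ = (∫⁻ θ, ((‖f ((rseq k : ℂ) * E θ)‖₊ : ENNReal))^2 ∂μ) * (ENNReal.ofReal Kb)^2 :=
          lintegral_mul_const' _ _ (by simp [ENNReal.pow_ne_top])
      _ ≤ ENNReal.ofReal (2*Real.pi*C) * (ENNReal.ofReal Kb)^2 := by
          apply mul_le_mul_left
          exact norm_sq_lintegral_le hf hC (rseq_pos k) (rseq_lt_one k)
  -- uniform integrability
  have hui : UnifIntegrable G 1 μ := by
    apply unifIntegrable_of le_rfl ENNReal.one_ne_top
      (fun k => (hcontG k).aestronglyMeasurable)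
    intro ε hε
    set Cc : NNReal := (A / ENNReal.ofReal ε).toNNReal + 1 with hCcdef
    have hCc0 : (Cc : ENNReal) ≠ 0 := by
      simp [hCcdef]
    have hCcT : (Cc : ENNReal) ≠ ⊤ := ENNReal.coe_ne_top
    have hACc : A ≤ ENNReal.ofReal ε * Cc := by
      have hεne : ENNReal.ofReal ε ≠ 0 := by
        simp [ENNReal.ofReal_eq_zero, not_le, hε]
      have hdivne : A / ENNReal.ofReal ε ≠ ⊤ := by
        exact (ENNReal.div_lt_top hAne hεne).ne
      have h1 : ((A / ENNReal.ofReal ε).toNNReal : ENNReal) = A / ENNReal.ofReal ε :=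
        ENNReal.coe_toNNReal hdivne
      calc A = ENNReal.ofReal ε * (A / ENNReal.ofReal ε) := by
            rw [ENNReal.mul_div_cancel hεne ENNReal.ofReal_ne_top]
        _ ≤ ENNReal.ofReal ε * Cc := by
            apply mul_le_mul_right
            rw [hCcdef]
            push_cast
            rw [h1]
            exact le_self_add
    refine ⟨Cc, fun k => ?_⟩
    have hsm : MeasurableSet {x : ℝ | Cc ≤ ‖G k x‖₊} :=
      measurableSet_le measurable_const (hcontG k).measurable.nnnorm
    rw [MeasureTheory.eLpNorm_one_eq_lintegral_enorm]
    calc ∫⁻ x, ‖({x : ℝ | Cc ≤ ‖G k x‖₊}.indicator (G k)) x‖₊ ∂μ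
        = ∫⁻ x in {x : ℝ | Cc ≤ ‖G k x‖₊}, (‖G k x‖₊ : ENNReal) ∂μ := by
          rw [← lintegral_indicator hsm]
          apply lintegral_congr
          intro x
          by_cases hx : x ∈ {x : ℝ | Cc ≤ ‖G k x‖₊} <;>
            simp [hx, Set.indicator_of_mem, Set.indicator_of_notMem]
      _ ≤ ∫⁻ x in {x : ℝ | Cc ≤ ‖G k x‖₊}, ((‖G k x‖₊ : ENNReal))^2 * (Cc : ENNReal)⁻¹ ∂μ := by
          apply setLIntegral_mono ((((hcontG k).measurable.nnnorm.coe_nnreal_ennreal.pow_const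
            2).mul_const _))
          intro x hx
          rw [Set.mem_setOf_eq] at hx
          have hca : (Cc : ENNReal) ≤ (‖G k x‖₊ : ENNReal) := ENNReal.coe_le_coe.2 hx
          calc (‖G k x‖₊ : ENNReal)
              = (‖G k x‖₊ : ENNReal) * ((Cc : ENNReal) * (Cc : ENNReal)⁻¹) := by
                rw [ENNReal.mul_inv_cancel hCc0 hCcT, mul_one]
            _ = ((‖G k x‖₊ : ENNReal) * Cc) * (Cc : ENNReal)⁻¹ := by ring
            _ ≤ ((‖G k x‖₊ : ENNReal) * (‖G k x‖₊ : ENNReal)) * (Cc : ENNReal)⁻¹ :=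
                mul_le_mul_left (mul_le_mul_right hca _) _
            _ = ((‖G k x‖₊ : ENNReal))^2 * (Cc : ENNReal)⁻¹ := by rw [pow_two]
      _ ≤ (∫⁻ x, ((‖G k x‖₊ : ENNReal))^2 ∂μ) * (Cc : ENNReal)⁻¹ := by
          rw [← lintegral_mul_const' _ _ (ENNReal.inv_ne_top.2 hCc0)]
          exact lintegral_mono' Measure.restrict_le_self le_rfl
      _ ≤ A * (Cc : ENNReal)⁻¹ := mul_le_mul_left (hA k) _
      _ ≤ ENNReal.ofReal ε := by
          calc A * (Cc : ENNReal)⁻¹ ≤ (ENNReal.ofReal ε * Cc) * (Cc : ENNReal)⁻¹ :=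
                mul_le_mul_left hACc _
            _ = ENNReal.ofReal ε * ((Cc : ENNReal) * (Cc : ENNReal)⁻¹) := by ring
            _ = ENNReal.ofReal ε := by rw [ENNReal.mul_inv_cancel hCc0 hCcT, mul_one]
  -- Vitali convergence
  haveI : IsFiniteMeasure μ := by rw [hμdef]; infer_instance
  have hLp := tendsto_Lp_finite_of_tendsto_ae le_rfl ENNReal.one_ne_top
    (fun k => (hcontG k).aestronglyMeasurable) hgmem hui hae
  have heq1 : ∀ k, eLpNorm (G k - g) 1 μ = ∫⁻ x, (‖G k x - g x‖₊ : ENNReal) ∂μ := fun k => by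
    rw [MeasureTheory.eLpNorm_one_eq_lintegral_enorm]; rfl
  simp only [heq1] at hLp
  have hintG : ∀ k, Integrable (G k) μ := fun k => by
    rw [hμdef]; exact (hcontG k).integrableOn_Ioc
  have hIntTendsto := MeasureTheory.tendsto_integral_of_L1 g
    (memLp_one_iff_integrable.1 hgmem).aestronglyMeasurable (Filter.Eventually.of_forall hintG) hLp
  have hGeq : ∀ k, ∫ θ, G k θ ∂μ = (2*Real.pi : ℂ) * f ((rseq k : ℂ) * z) := by
    intro k
    rw [hμdef, ← cauchy_dilate hf (rseq_pos k) (rseq_lt_one k) hz]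
    refine integral_congr_ae (Filter.Eventually.of_forall fun θ => ?_)
    exact (div_eq_mul_inv _ _).symm
  have hTendsto2 : Filter.Tendsto (fun k => (2*Real.pi:ℂ) * f ((rseq k : ℂ) * z))
      Filter.atTop (nhds ((2*Real.pi:ℂ) * f z)) := by
    have hz' : z ∈ Metric.ball (0:ℂ) 1 := by
      rw [Metric.mem_ball, dist_zero_right]; exact hz
    have hca : ContinuousAt f z :=
      (hf.differentiableAt (Metric.isOpen_ball.mem_nhds hz')).continuousAt
    have h1 : Filter.Tendsto rseq Filter.atTop (nhds (1:ℝ)) :=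
      rseq_tendsto.mono_right nhdsWithin_le_nhds
    have h2 : Filter.Tendsto (fun k => ((rseq k : ℝ) : ℂ)) Filter.atTop (nhds (1:ℂ)) :=
      (Complex.continuous_ofReal.tendsto 1).comp h1
    have h3 : Filter.Tendsto (fun k => ((rseq k : ℝ) : ℂ) * z) Filter.atTop (nhds z) := by
      simpa using h2.mul_const z
    exact tendsto_const_nhds.mul (hca.tendsto.comp h3)
  have hfinal : ∫ θ, g θ ∂μ = (2*Real.pi:ℂ) * f z :=
    tendsto_nhds_unique (hIntTendsto.congr hGeq) hTendsto2
  rw [← hfinal, hμdef]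
  exact integral_congr_ae (Filter.Eventually.of_forall fun θ => (div_eq_mul_inv _ _))

end Boundary

end HardyAux

open HardyAux

/-- representation formula for Hardy space functions: if `f ∈ H²(D)`, i.e.
`f` is analytic on the unit disk with uniformly bounded quadratic means over circles of radius
`ρ < 1`, and the values of `f` on the unit circle are its (nontangential/radial) boundary
values, then for every `n ≥ 1` and every `z ∈ D`,
`f(z) = ∑_{m=0}^{n-1} c_m(f)·φ_m(z) + B_n(z)·∫_T conj(B_n(t))·f(t)/(1 - z·conj(t)) dσ(t)`. -/
theorem hardy_representation (a : ℕ → ℂ) (ha : ∀ k, ‖a k‖ < 1)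
    (f : ℂ → ℂ)
    (hf : DifferentiableOn ℂ f (Metric.ball (0:ℂ) 1))
    (hH2 : ∃ C : ℝ, ∀ ρ : ℝ, 0 < ρ → ρ < 1 →
      circleAvgR (fun t => ‖f ((ρ:ℂ) * t)‖ ^ 2) ≤ C)
    (hbdry : ∀ᵐ θ : ℝ, Filter.Tendsto
      (fun ρ : ℝ => f ((ρ:ℂ) * Complex.exp (θ * Complex.I)))
      (nhdsWithin 1 (Set.Iio 1)) (nhds (f (Complex.exp (θ * Complex.I)))))
    (n : ℕ) (hn : 1 ≤ n) (z : ℂ) (hz : ‖z‖ < 1) :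
    f z = (∑ m ∈ Finset.range n, fourierCoef a f m * TM a m z) +
      Blaschke a n z *
        circleAvg (fun t =>
          (starRingEnd ℂ) (Blaschke a n t) * f t / (1 - z * (starRingEnd ℂ) t)) := by
  classical
  obtain ⟨C, hC⟩ := hH2
  have h2pi : (0:ℝ) ≤ 2 * Real.pi := by positivity
  have habs : ∀ t ∈ Metric.sphere (0:ℂ) 1, ‖t‖ = 1 := fun t ht => by
    rwa [Metric.mem_sphere, Complex.dist_eq, sub_zero] at ht
  have hd1 : ∀ (j : ℕ), ∀ t ∈ Metric.sphere (0:ℂ) 1,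
      (1:ℂ) - (starRingEnd ℂ) (a j) * t ≠ 0 :=
    fun j t ht => one_sub_ne (by simpa using ha j) (habs t ht).le
  have hTMc : ∀ m : ℕ, ContinuousOn (fun t : ℂ => (starRingEnd ℂ) (TM a m t))
      (Metric.sphere (0:ℂ) 1) := by
    intro m
    apply Complex.continuous_conj.comp_continuousOn
    unfold TM
    apply ContinuousOn.mul
    · exact ContinuousOn.div continuousOn_const
        (continuousOn_const.sub (continuousOn_const.mul continuousOn_id)) (hd1 m)
    · apply continuousOn_finset_prod
      intro j _
      apply ContinuousOn.mul continuousOn_const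
      exact ContinuousOn.div (continuousOn_id.sub continuousOn_const)
        (continuousOn_const.sub (continuousOn_const.mul continuousOn_id)) (hd1 j)
  have hBc : ContinuousOn (fun t : ℂ => (starRingEnd ℂ) (Blaschke a n t))
      (Metric.sphere (0:ℂ) 1) := by
    apply Complex.continuous_conj.comp_continuousOn
    unfold Blaschke
    apply continuousOn_finset_prod
    intro j _
    exact ContinuousOn.div (continuousOn_id.sub continuousOn_const)
      (continuousOn_const.sub (continuousOn_const.mul continuousOn_id)) (hd1 j)
  have hker := contOn_kernel hz
  have hintTM : ∀ m : ℕ, Integrable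
      (fun θ : ℝ => f (E θ) * (starRingEnd ℂ) (TM a m (E θ)))
      (volume.restrict (Set.Ioc 0 (2*Real.pi))) := fun m =>
    (integrable_boundary_mul hf hC hbdry _ (hTMc m)).congr
      (Filter.Eventually.of_forall fun θ => mul_comm _ _)
  have hintB : Integrable (fun θ : ℝ => (starRingEnd ℂ) (Blaschke a n (E θ)) *
      f (E θ) / (1 - z * (starRingEnd ℂ) (E θ)))
      (volume.restrict (Set.Ioc 0 (2*Real.pi))) := by
    have hW : ContinuousOn (fun t : ℂ => (starRingEnd ℂ) (Blaschke a n t) *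
        (1 - z * (starRingEnd ℂ) t)⁻¹) (Metric.sphere (0:ℂ) 1) := hBc.mul hker
    exact (integrable_boundary_mul hf hC hbdry _ hW).congr
      (Filter.Eventually.of_forall fun θ => by ring)
  have hpt : ∀ θ : ℝ, f (E θ) / (1 - z * (starRingEnd ℂ) (E θ)) =
      (∑ m ∈ Finset.range n,
        f (E θ) * (starRingEnd ℂ) (TM a m (E θ)) * TM a m z) +
        Blaschke a n z * ((starRingEnd ℂ) (Blaschke a n (E θ)) * f (E θ) /
          (1 - z * (starRingEnd ℂ) (E θ))) := by
    intro θ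
    have hcd := CD a ha n z (E θ) hz (abs_E θ)
    have hmul : ∑ m ∈ Finset.range n,
        f (E θ) * (starRingEnd ℂ) (TM a m (E θ)) * TM a m z =
        f (E θ) * ∑ m ∈ Finset.range n,
          (starRingEnd ℂ) (TM a m (E θ)) * TM a m z := by
      rw [Finset.mul_sum]
      exact Finset.sum_congr rfl fun m _ => by ring
    linear_combination -hmul - f (E θ) * hcd
  have hcau := cauchy_boundary hf hC hbdry hz
  have hsum : (2*Real.pi:ℂ) * f z =
      (∑ m ∈ Finset.range n, (∫ θ in Set.Ioc (0:ℝ) (2*Real.pi),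
        f (E θ) * (starRingEnd ℂ) (TM a m (E θ)) ∂volume) * TM a m z) +
      Blaschke a n z * ∫ θ in Set.Ioc (0:ℝ) (2*Real.pi),
        (starRingEnd ℂ) (Blaschke a n (E θ)) * f (E θ) /
          (1 - z * (starRingEnd ℂ) (E θ)) ∂volume := by
    rw [← hcau]
    rw [integral_congr_ae (Filter.Eventually.of_forall hpt)]
    rw [integral_add (integrable_finset_sum _ (fun m _ => (hintTM m).mul_const _))
      (hintB.const_mul _)]
    rw [integral_finset_sum _ (fun m _ => (hintTM m).mul_const _)]
    rw [integral_const_mul]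
    congr 1
    exact Finset.sum_congr rfl fun m _ => integral_mul_const _ _
  have h2πne : (2*Real.pi:ℂ) ≠ 0 :=
    mul_ne_zero two_ne_zero (Complex.ofReal_ne_zero.2 Real.pi_ne_zero)
  have hEq : ∀ (W : ℂ → ℂ), circleAvg W = (1 / (2*Real.pi) : ℂ) *
      ∫ θ in Set.Ioc (0:ℝ) (2*Real.pi), W (E θ) ∂volume := by
    intro W
    unfold circleAvg
    rw [intervalIntegral.integral_of_le h2pi]
    rfl
  have hc : (2*Real.pi:ℂ) * (1 / (2*Real.pi) : ℂ) = 1 := by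
    field_simp
  simp only [fourierCoef, hEq]
  set c : ℂ := (1 / (2*Real.pi) : ℂ) with hcdef
  set IB := ∫ θ in Set.Ioc (0:ℝ) (2*Real.pi),
    (starRingEnd ℂ) (Blaschke a n (E θ)) * f (E θ) /
      (1 - z * (starRingEnd ℂ) (E θ)) ∂volume with hIBdef
  set Im : ℕ → ℂ := fun m => ∫ θ in Set.Ioc (0:ℝ) (2*Real.pi),
    f (E θ) * (starRingEnd ℂ) (TM a m (E θ)) ∂volume with hImdef
  have hms : ∑ m ∈ Finset.range n, (c * Im m) * TM a m z =
      c * ∑ m ∈ Finset.range n, Im m * TM a m z := by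
    rw [Finset.mul_sum]
    exact Finset.sum_congr rfl fun m _ => by ring
  calc f z = c * ((2*Real.pi:ℂ) * f z) := by
        rw [← mul_assoc, mul_comm c (2*Real.pi:ℂ), hc, one_mul]
    _ = c * ((∑ m ∈ Finset.range n, Im m * TM a m z) + Blaschke a n z * IB) := by
        rw [hsum]
    _ = (∑ m ∈ Finset.range n, (c * Im m) * TM a m z) + Blaschke a n z * (c * IB) := by
        rw [mul_add, hms]; ring
end
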